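/- For n odd with n = 2r + 3 and r ≥ 1: the two-variable Lucas sequence satisfies 𝓛_n(x,x) = x^n · L_n(1/x) interpreted as the polynomial Σ_j c_j x^{n−j} where L_n(t) = Σ_j c_j t^j; equivalently, g_{r+1}(x,x) + x^n equals x^n·L_n(x^{−1}) + x^n, i.e., p_{r+1}(x,x) = Σ_{j=0}^{⌊n/2⌋} c_j x^{n−j} + x^n where p_n(x,y) = g_n(x,y) + y^{2n+1}. -/
import Mathlib


open Polynomial

/-- `g₀ = x`, `g₁ = x³ + 3xy`, `gₙ = (x² + 2y)·gₙ₋₁ − y²·gₙ₋₂`. -/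
def gSeq {R : Type*} [CommRing R] (x y : R) : ℕ → R
  | 0 => x
  | 1 => x ^ 3 + 3 * x * y
  | n + 2 => (x ^ 2 + 2 * y) * gSeq x y (n + 1) - y ^ 2 * gSeq x y n

/-- `pₙ(x, y) = gₙ(x, y) + y^{2n+1}`. -/
def pSeq {R : Type*} [CommRing R] (x y : R) (n : ℕ) : R :=
  gSeq x y n + y ^ (2 * n + 1)

/-- The Lucas polynomials: `L₀ = 2`, `L₁ = 1`, `Lₙ = Lₙ₋₁ + t·Lₙ₋₂`, with
coefficients `cⱼ = (lucasPoly n).coeff j`. -/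
noncomputable def lucasPoly : ℕ → Polynomial ℤ
  | 0 => 2
  | 1 => 1
  | n + 2 => lucasPoly (n + 1) + X * lucasPoly n

/-- The diagonal two-variable Lucas sequence `𝓛ₙ(X, X)`. -/
noncomputable def Lseq : ℕ → Polynomial ℤ
  | 0 => 2
  | 1 => X
  | n + 2 => X * Lseq (n + 1) + X * Lseq n

lemma lucasPoly_natDegree : ∀ n, (lucasPoly n).natDegree ≤ n / 2 := by
  intro n
  induction n using Nat.strong_induction_on with
  | _ n ih =>
    match n with
    | 0 => simp [lucasPoly]
    | 1 => simp [lucasPoly]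
    | n + 2 =>
      rw [lucasPoly]
      refine le_trans (natDegree_add_le _ _) (max_le ?_ ?_)
      · exact le_trans (ih (n+1) (by omega)) (by omega)
      · refine le_trans natDegree_mul_le ?_
        have := ih n (by omega)
        simp only [natDegree_X]
        omega

lemma reflect_succ (p : Polynomial ℤ) (n : ℕ) (h : p.natDegree ≤ n) :
    p.reflect (n + 1) = X * p.reflect n := by
  have h1 : (1 : Polynomial ℤ).natDegree ≤ 1 := by simp
  have := reflect_mul (1 : Polynomial ℤ) p h1 h
  rw [one_mul] at this
  rw [add_comm n 1] at *
  rw [this]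
  have : reflect 1 (1 : Polynomial ℤ) = X := by
    rw [show (1 : Polynomial ℤ) = C 1 by simp, reflect_C]
    simp
  rw [this]

lemma Lseq_eq_reflect : ∀ n, Lseq n = (lucasPoly n).reflect n := by
  have key : ∀ n, Lseq n = (lucasPoly n).reflect n ∧
      Lseq (n+1) = (lucasPoly (n+1)).reflect (n+1) := by
    intro n
    induction n with
    | zero =>
      constructor
      · show (2 : Polynomial ℤ) = reflect 0 (2 : Polynomial ℤ)
        rw [show (2 : Polynomial ℤ) = C 2 by simp, reflect_C]
        simp
      · show (X : Polynomial ℤ) = reflect 1 (1 : Polynomial ℤ)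
        rw [show (1 : Polynomial ℤ) = C 1 by simp, reflect_C]
        simp
    | succ n ih =>
      refine ⟨ih.2, ?_⟩
      show X * Lseq (n+1) + X * Lseq n = _
      rw [ih.1, ih.2]
      rw [show lucasPoly (n+2) = lucasPoly (n+1) + X * lucasPoly n from rfl]
      rw [reflect_add]
      have d1 : (lucasPoly (n+1)).natDegree ≤ n + 1 :=
        le_trans (lucasPoly_natDegree (n+1)) (by omega)
      have d0 : (lucasPoly n).natDegree ≤ n :=
        le_trans (lucasPoly_natDegree n) (by omega)
      rw [reflect_succ _ _ d1]
      have : reflect (n+2) (X * lucasPoly n) = X * reflect n (lucasPoly n) := by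
        have hX : (X : Polynomial ℤ).natDegree ≤ 2 := by simp
        have := reflect_mul (X : Polynomial ℤ) (lucasPoly n) hX d0
        rw [show (2 : ℕ) + n = n + 2 by omega] at this
        rw [this]
        have : reflect 2 (X : Polynomial ℤ) = X := by
          have := reflect_monomial (R := ℤ) 2 1
          simpa using this
        rw [this]
      rw [this]
  exact fun n => (key n).1

lemma gSeq_diag : ∀ n, gSeq (X : Polynomial ℤ) X n = Lseq (2 * n + 1) := by
  have key : ∀ n, gSeq (X : Polynomial ℤ) X n = Lseq (2 * n + 1) ∧
      gSeq (X : Polynomial ℤ) X (n+1) = Lseq (2 * (n+1) + 1) := by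
    intro n
    induction n with
    | zero =>
      constructor
      · show (X : Polynomial ℤ) = Lseq 1; rfl
      · show (X : Polynomial ℤ)^3 + 3 * X * X = Lseq 3
        show _ = X * (X * Lseq 1 + X * Lseq 0) + X * Lseq 1
        show _ = X * (X * X + X * 2) + X * X
        ring
    | succ n ih =>
      refine ⟨ih.2, ?_⟩
      show (X^2 + 2*X) * gSeq (X : Polynomial ℤ) X (n+1) - X^2 * gSeq (X : Polynomial ℤ) X n = _
      rw [ih.1, ih.2]
      show _ = Lseq (2*n+5)
      have e5 : Lseq (2*n+5) = X * Lseq (2*n+4) + X * Lseq (2*n+3) := rfl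
      have e4 : Lseq (2*n+4) = X * Lseq (2*n+3) + X * Lseq (2*n+2) := rfl
      have e3 : Lseq (2*n+3) = X * Lseq (2*n+2) + X * Lseq (2*n+1) := rfl
      have h1 : Lseq (2*(n+1)+1) = Lseq (2*n+3) := by congr 1
      rw [h1, e5, e4]
      have hX2 : (X : Polynomial ℤ) * Lseq (2*n+2) = Lseq (2*n+3) - X * Lseq (2*n+1) := by
        rw [e3]; ring
      linear_combination (-(X : Polynomial ℤ)) * hX2
  exact fun n => (key n).1

lemma reflect_eq_sum (p : Polynomial ℤ) (n : ℕ) (h : p.natDegree ≤ n) :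
    p.reflect n = ∑ j ∈ Finset.range (n + 1), p.coeff j • (X : Polynomial ℤ) ^ (n - j) := by
  ext i
  rw [coeff_reflect, finset_sum_coeff]
  simp only [coeff_smul, coeff_X_pow, smul_eq_mul, mul_ite, mul_one, mul_zero]
  by_cases hi : i ≤ n
  · rw [revAt_le hi]
    rw [Finset.sum_eq_single (n - i)]
    · rw [if_pos (by omega)]
    · intro j hj hne
      rw [Finset.mem_range] at hj
      rw [if_neg (by omega)]
    · intro hmem
      exact absurd (Finset.mem_range.mpr (by omega)) hmem
  · rw [revAt_eq_self_of_lt (by omega)]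
    rw [coeff_eq_zero_of_natDegree_lt (by omega)]
    rw [Finset.sum_eq_zero]
    intro j hj
    rw [Finset.mem_range] at hj
    rw [if_neg (by omega)]

/-- For odd `n = 2r + 3` with `r ≥ 1`:
`p_{r+1}(x, x) = Σ_{j=0}^{⌊n/2⌋} cⱼ x^{n-j} + xⁿ`, where `Lₙ(t) = Σⱼ cⱼ tʲ`
(i.e. `p_{r+1}(x,x) = xⁿ·Lₙ(1/x) + xⁿ` interpreted polynomially). -/
theorem pSeq_diag_eq_lucas_reversal (r : ℕ) (hr : 1 ≤ r) :
    pSeq (X : Polynomial ℤ) X (r + 1) =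
      (∑ j ∈ Finset.range ((2 * r + 3) / 2 + 1),
        ((lucasPoly (2 * r + 3)).coeff j) • (X : Polynomial ℤ) ^ (2 * r + 3 - j))
      + X ^ (2 * r + 3) := by
  have hn : 2 * (r + 1) + 1 = 2 * r + 3 := by omega
  rw [pSeq, gSeq_diag, hn, Lseq_eq_reflect]
  have hdeg : (lucasPoly (2 * r + 3)).natDegree ≤ 2 * r + 3 :=
    le_trans (lucasPoly_natDegree _) (by omega)
  rw [reflect_eq_sum _ _ hdeg]
  congr 1
  rw [show (2 * r + 3) / 2 + 1 = r + 2 by omega]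
  symm
  apply Finset.sum_subset
  · apply Finset.range_subset_range.mpr; omega
  · intro j hj hj2
    rw [Finset.mem_range] at hj hj2
    have : (lucasPoly (2 * r + 3)).natDegree < j := by
      have := lucasPoly_natDegree (2 * r + 3)
      omega
    rw [coeff_eq_zero_of_natDegree_lt this, zero_smul]
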